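/- Assume Assumption (β) and let Ω ⊆ V. For every finitely supported f : V → ℂ with supp f ⊆ Ω and ‖f‖_{β⁺} = 1 one has 2 − √(4 − h̃(Ω)²) ≤ 2 Re (Δ̃f, f)_{β⁺} ≤ 2 + √(4 − h̃(Ω)²); in particular h̃(Ω) ≤ 2, so the square roots are of nonnegative numbers. -/

import Mathlib

open Function Complex

noncomputable def betaPlus {V : Type*} (b : V → V → ℝ) (x : V) : ℝ := ∑ᶠ y, b x y
noncomputable def betaMinus {V : Type*} (b : V → V → ℝ) (x : V) : ℝ := ∑ᶠ y, b y x

/-- The Laplacian `Δf(x) = (1/m(x)) Σ_y b(x,y)(f(x) - f(y))`; the normalized Laplacian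
`Δ̃` is the case `m = β⁺`. -/
noncomputable def lap {V : Type*} (b : V → V → ℝ) (m : V → ℝ) (f : V → ℂ) (x : V) : ℂ :=
  (1 / (m x : ℂ)) * ∑ᶠ y, (b x y : ℂ) * (f x - f y)

/-- The weighted inner product `(f,g)_w = Σ_x w(x) f(x) conj(g(x))`. -/
noncomputable def innerW {V : Type*} (w : V → ℝ) (f g : V → ℂ) : ℂ :=
  ∑ᶠ x, (w x : ℂ) * f x * (starRingEnd ℂ) (g x)

/-- The total edge-boundary weight of a finite set `U`:
`b(∂_E U) = Σ_{x∈U, y∉U} b(x,y) + Σ_{x∉U, y∈U} b(x,y)`. -/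
noncomputable def bdryWeight {V : Type*} [DecidableEq V] (b : V → V → ℝ) (U : Finset V) :
    ℝ :=
  ∑ x ∈ U, ∑ᶠ y, (if y ∈ U then 0 else b x y + b y x)

/-- The Cheeger constant of `Ω ⊆ V` with respect to the weight `w`:
`h(Ω) = inf { b(∂_E U) / w(U) : U ⊆ Ω finite nonempty }`. -/
noncomputable def cheeger {V : Type*} [DecidableEq V] (b : V → V → ℝ) (w : V → ℝ)
    (Ω : Set V) : ℝ :=
  sInf {r : ℝ | ∃ U : Finset V, U.Nonempty ∧ ↑U ⊆ Ω ∧ r = bdryWeight b U / ∑ x ∈ U, w x}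

/-- The bottom of the real part of the numerical range of the Dirichlet Laplacian on `Ω`:
`ν(Δ^D_Ω) = inf { Re (Δf, f)_m : f finitely supported, supp f ⊆ Ω, ‖f‖_m = 1 }`. -/
noncomputable def nuD {V : Type*} (b : V → V → ℝ) (m : V → ℝ) (Ω : Set V) : ℝ :=
  sInf {r : ℝ | ∃ f : V → ℂ, (support f).Finite ∧ support f ⊆ Ω ∧
    innerW m f f = 1 ∧ r = (innerW m (lap b m f) f).re}

lemma bdryWeight_nonneg {V : Type*} [DecidableEq V] {b : V → V → ℝ}
    (hb : ∀ x y, 0 ≤ b x y) (U : Finset V) : 0 ≤ bdryWeight b U := by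
  refine Finset.sum_nonneg fun x _ => finsum_nonneg fun y => ?_
  by_cases h : y ∈ U <;> simp [h, add_nonneg (hb _ _) (hb _ _)]

lemma cheeger_bddBelow {V : Type*} [DecidableEq V] {b : V → V → ℝ} {w : V → ℝ}
    (hb : ∀ x y, 0 ≤ b x y) (hw : ∀ x, 0 < w x) (Ω : Set V) :
    BddBelow {r : ℝ | ∃ U : Finset V, U.Nonempty ∧ ↑U ⊆ Ω ∧ r = bdryWeight b U / ∑ x ∈ U, w x} := by
  refine ⟨0, fun r hr => ?_⟩
  obtain ⟨U, hU, -, rfl⟩ := hr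
  exact div_nonneg (bdryWeight_nonneg hb U) (Finset.sum_nonneg fun x _ => (hw x).le)

lemma cheeger_nonneg {V : Type*} [DecidableEq V] {b : V → V → ℝ} {w : V → ℝ}
    (hb : ∀ x y, 0 ≤ b x y) (hw : ∀ x, 0 < w x) (Ω : Set V) :
    0 ≤ cheeger b w Ω := by
  refine Real.sInf_nonneg fun r hr => ?_
  obtain ⟨U, hU, -, rfl⟩ := hr
  exact div_nonneg (bdryWeight_nonneg hb U) (Finset.sum_nonneg fun x _ => (hw x).le)

lemma cheeger_le {V : Type*} [DecidableEq V] {b : V → V → ℝ} {w : V → ℝ}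
    (hb : ∀ x y, 0 ≤ b x y) (hw : ∀ x, 0 < w x) (Ω : Set V) {U : Finset V}
    (hU : U.Nonempty) (hUΩ : ↑U ⊆ Ω) :
    cheeger b w Ω * ∑ x ∈ U, w x ≤ bdryWeight b U := by
  have hpos : 0 < ∑ x ∈ U, w x :=
    Finset.sum_pos (fun x _ => hw x) hU
  have h1 : cheeger b w Ω ≤ bdryWeight b U / ∑ x ∈ U, w x :=
    csInf_le (cheeger_bddBelow hb hw Ω) ⟨U, hU, hUΩ, rfl⟩
  calc cheeger b w Ω * ∑ x ∈ U, w x ≤ (bdryWeight b U / ∑ x ∈ U, w x) * ∑ x ∈ U, w x :=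
        mul_le_mul_of_nonneg_right h1 hpos.le
    _ = bdryWeight b U := div_mul_cancel₀ _ hpos.ne'

lemma coarea {V : Type*} [DecidableEq V] (b : V → V → ℝ) (hb : ∀ x y, 0 ≤ b x y)
    (hβp : ∀ x, 0 < betaPlus b x) (Ω : Set V) (T : Finset V) :
    ∀ (n : ℕ) (φ : V → ℝ), (T.filter (fun x => φ x ≠ 0)).card ≤ n →
    (∀ x, 0 ≤ φ x) → (∀ x, φ x ≠ 0 → x ∈ T ∧ x ∈ Ω) →
    (∀ x y, φ x ≠ 0 → (b x y ≠ 0 ∨ b y x ≠ 0) → y ∈ T) →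
    cheeger b (betaPlus b) Ω * ∑ x ∈ T, betaPlus b x * φ x ≤
      ∑ x ∈ T, ∑ y ∈ T, b x y * |φ x - φ y| := by
  intro n
  induction n with
  | zero =>
    intro φ hcard hφ0 hsupp hnbr
    have hz : ∀ x, φ x = 0 := by
      intro x
      by_contra hx
      have : x ∈ T.filter (fun x => φ x ≠ 0) := Finset.mem_filter.2 ⟨(hsupp x hx).1, hx⟩
      have := Finset.card_pos.2 ⟨x, this⟩
      omega
    simp [hz]
  | succ n ih =>
    intro φ hcard hφ0 hsupp hnbr
    set U := T.filter (fun x => φ x ≠ 0) with hUdef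
    rcases U.eq_empty_or_nonempty with hUe | hUne
    · have hz : ∀ x, φ x = 0 := by
        intro x
        by_contra hx
        have : x ∈ U := Finset.mem_filter.2 ⟨(hsupp x hx).1, hx⟩
        simp [hUe] at this
      simp [hz]
    · obtain ⟨x₀, hx₀U, hx₀min⟩ := Finset.exists_min_image U φ hUne
      set m := φ x₀ with hmdef
      have hm0 : 0 < m := lt_of_le_of_ne (hφ0 x₀) (Ne.symm (Finset.mem_filter.1 hx₀U).2)
      have hmem : ∀ x, φ x ≠ 0 → x ∈ U := fun x hx => Finset.mem_filter.2 ⟨(hsupp x hx).1, hx⟩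
      have hmle : ∀ x, φ x ≠ 0 → m ≤ φ x := fun x hx => hx₀min x (hmem x hx)
      set φ' : V → ℝ := fun x => if φ x ≠ 0 then φ x - m else 0 with hφ'def
      have hφ'0 : ∀ x, 0 ≤ φ' x := by
        intro x; by_cases hx : φ x = 0 <;> simp [hφ'def, hx]
        exact hmle x hx
      have hφ'φ : ∀ x, φ' x ≠ 0 → φ x ≠ 0 := by
        intro x hx; by_contra h; simp [hφ'def, h] at hx
      have hcard' : (T.filter (fun x => φ' x ≠ 0)).card ≤ n := by
        have hsub : T.filter (fun x => φ' x ≠ 0) ⊆ U.erase x₀ := by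
          intro x hx
          rcases Finset.mem_filter.1 hx with ⟨hxT, hx'⟩
          refine Finset.mem_erase.2 ⟨?_, hmem x (hφ'φ x hx')⟩
          rintro rfl
          simp [hφ'def, (Finset.mem_filter.1 hx₀U).2, hmdef] at hx'
        have := Finset.card_le_card hsub
        have hce := Finset.card_erase_of_mem hx₀U
        omega
      -- indicator
      set χ : V → ℝ := fun x => if φ x ≠ 0 then 1 else 0 with hχdef
      have hpt : ∀ x y, |φ x - φ y| = |φ' x - φ' y| + m * |χ x - χ y| := by
        intro x y
        by_cases hx : φ x = 0 <;> by_cases hy : φ y = 0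
        · simp [hφ'def, hχdef, hx, hy]
        · have := hmle y hy
          simp only [hφ'def, hχdef, hx, hy, if_neg, if_pos, ne_eq, not_true_eq_false,
            not_false_eq_true, if_true, if_false]
          rw [zero_sub, zero_sub, zero_sub, abs_neg, abs_neg, abs_neg,
            _root_.abs_of_nonneg (hφ0 y), _root_.abs_of_nonneg (by linarith), _root_.abs_of_nonneg zero_le_one]
          ring
        · have := hmle x hx
          simp only [hφ'def, hχdef, hx, hy, ne_eq, not_true_eq_false, not_false_eq_true,
            if_true, if_false]
          rw [sub_zero, sub_zero, sub_zero, _root_.abs_of_nonneg (hφ0 x),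
            _root_.abs_of_nonneg (by linarith), _root_.abs_of_nonneg zero_le_one]
          ring
        · have hxm := hmle x hx; have hym := hmle y hy
          simp only [hφ'def, hχdef, hx, hy, ne_eq, not_false_eq_true, if_true, if_false]
          have : φ x - m - (φ y - m) = φ x - φ y := by ring
          rw [this, sub_self, abs_zero]
          ring
      -- decompose RHS
      have hRHS : ∑ x ∈ T, ∑ y ∈ T, b x y * |φ x - φ y|
          = (∑ x ∈ T, ∑ y ∈ T, b x y * |φ' x - φ' y|)
            + m * ∑ x ∈ T, ∑ y ∈ T, b x y * |χ x - χ y| := by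
        rw [Finset.mul_sum, ← Finset.sum_add_distrib]
        refine Finset.sum_congr rfl fun x _ => ?_
        rw [Finset.mul_sum, ← Finset.sum_add_distrib]
        refine Finset.sum_congr rfl fun y _ => ?_
        rw [hpt x y]; ring
      -- indicator double sum equals boundary weight
      have hUT : ∀ x ∈ U, φ x ≠ 0 := fun x hx => (Finset.mem_filter.1 hx).2
      have hind : ∑ x ∈ T, ∑ y ∈ T, b x y * |χ x - χ y| = bdryWeight b U := by
        have step1 : ∑ x ∈ T, ∑ y ∈ T, b x y * |χ x - χ y|
            = ∑ x ∈ T, ∑ y ∈ T, ((if x ∈ U ∧ y ∉ U then b x y else 0)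
                + (if y ∈ U ∧ x ∉ U then b x y else 0)) := by
          refine Finset.sum_congr rfl fun x hxT => Finset.sum_congr rfl fun y hyT => ?_
          have hxiff : x ∈ U ↔ φ x ≠ 0 := by
            constructor
            · exact hUT x
            · intro h; exact hmem x h
          have hyiff : y ∈ U ↔ φ y ≠ 0 := by
            constructor
            · exact hUT y
            · intro h; exact hmem y h
          have hcx : χ x = if x ∈ U then 1 else 0 := by
            simp only [hχdef]
            by_cases hx : x ∈ U
            · rw [if_pos (hxiff.1 hx), if_pos hx]
            · rw [if_neg (fun h => hx (hxiff.2 h)), if_neg hx]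
          have hcy : χ y = if y ∈ U then 1 else 0 := by
            simp only [hχdef]
            by_cases hy : y ∈ U
            · rw [if_pos (hyiff.1 hy), if_pos hy]
            · rw [if_neg (fun h => hy (hyiff.2 h)), if_neg hy]
          rw [hcx, hcy]
          by_cases hx : x ∈ U <;> by_cases hy : y ∈ U <;>
            simp [hx, hy, _root_.abs_of_nonneg (hb x y)]
        have step2 : ∑ x ∈ T, ∑ y ∈ T, ((if x ∈ U ∧ y ∉ U then b x y else 0)
                + (if y ∈ U ∧ x ∉ U then b x y else 0))
            = ∑ x ∈ T, ∑ y ∈ T, (if x ∈ U ∧ y ∉ U then b x y + b y x else 0) := by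
          simp only [Finset.sum_add_distrib]
          have hswap : ∑ x ∈ T, ∑ y ∈ T, (if y ∈ U ∧ x ∉ U then b x y else 0)
              = ∑ x ∈ T, ∑ y ∈ T, (if x ∈ U ∧ y ∉ U then b y x else 0) := by
            rw [Finset.sum_comm]
          rw [hswap, ← Finset.sum_add_distrib]
          refine Finset.sum_congr rfl fun x _ => ?_
          rw [← Finset.sum_add_distrib]
          refine Finset.sum_congr rfl fun y _ => ?_
          by_cases h : x ∈ U ∧ y ∉ U <;> simp [h]
        have step3 : ∀ x ∈ T, ∑ y ∈ T, (if x ∈ U ∧ y ∉ U then b x y + b y x else 0)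
            = if x ∈ U then ∑ y ∈ T, (if y ∈ U then (0:ℝ) else b x y + b y x) else 0 := by
          intro x _
          by_cases hx : x ∈ U
          · rw [if_pos hx]
            refine Finset.sum_congr rfl fun y _ => ?_
            by_cases hy : y ∈ U <;> simp [hx, hy]
          · rw [if_neg hx]
            refine Finset.sum_eq_zero fun y _ => ?_
            simp [hx]
        have step4 : ∑ x ∈ T, (if x ∈ U then ∑ y ∈ T, (if y ∈ U then (0:ℝ) else b x y + b y x) else 0)
            = ∑ x ∈ U, ∑ y ∈ T, (if y ∈ U then (0:ℝ) else b x y + b y x) := by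
          rw [Finset.sum_ite_mem, Finset.inter_eq_right.2 (Finset.filter_subset _ _)]
        have step5 : ∀ x ∈ U, (∑ᶠ y, (if y ∈ U then (0:ℝ) else b x y + b y x))
            = ∑ y ∈ T, (if y ∈ U then (0:ℝ) else b x y + b y x) := by
          intro x hx
          refine finsum_eq_finset_sum_of_support_subset _ fun y hy => ?_
          simp only [Function.mem_support] at hy
          by_cases hyU : y ∈ U
          · simp [hyU] at hy
          · rw [if_neg hyU] at hy
            have : b x y ≠ 0 ∨ b y x ≠ 0 := by
              by_contra h
              push_neg at h
              rw [h.1, h.2] at hy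
              simp at hy
            exact hnbr x y (hUT x hx) this
        rw [step1, step2]
        rw [Finset.sum_congr rfl step3, step4, bdryWeight]
        exact (Finset.sum_congr rfl step5).symm
      -- decompose LHS
      have hLHS : ∑ x ∈ T, betaPlus b x * φ x
          = (∑ x ∈ T, betaPlus b x * φ' x) + m * ∑ x ∈ U, betaPlus b x := by
        have : ∑ x ∈ T, betaPlus b x * φ x
            = ∑ x ∈ T, (betaPlus b x * φ' x + m * (if x ∈ U then betaPlus b x else 0)) := by
          refine Finset.sum_congr rfl fun x hxT => ?_
          by_cases hx : φ x = 0
          · have : x ∉ U := fun h => hUT x h hx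
            simp [hφ'def, hx, this]
          · have hxU : x ∈ U := hmem x hx
            simp only [hφ'def, hx, if_pos hxU, ne_eq, not_false_eq_true, if_true]
            ring
        rw [this, Finset.sum_add_distrib, ← Finset.mul_sum, Finset.sum_ite_mem,
          Finset.inter_eq_right.2 (Finset.filter_subset _ _)]
      -- cheeger bound for U
      have hUΩ : ↑U ⊆ Ω := by
        intro x hx
        exact (hsupp x (hUT x hx)).2
      have hch : cheeger b (betaPlus b) Ω * ∑ x ∈ U, betaPlus b x ≤ bdryWeight b U :=
        cheeger_le hb hβp Ω hUne hUΩ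
      have hIH := ih φ' hcard' hφ'0
        (fun x hx => hsupp x (hφ'φ x hx))
        (fun x y hx => hnbr x y (hφ'φ x hx))
      rw [hLHS, hRHS, hind, mul_add]
      have h2 : cheeger b (betaPlus b) Ω * (m * ∑ x ∈ U, betaPlus b x) ≤ m * bdryWeight b U := by
        rw [mul_comm m, ← mul_assoc] at *
        calc cheeger b (betaPlus b) Ω * (∑ x ∈ U, betaPlus b x) * m
            ≤ bdryWeight b U * m := mul_le_mul_of_nonneg_right hch hm0.le
          _ = m * bdryWeight b U := mul_comm _ _
      linarith

lemma key_re (z w : ℂ) :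
    2 * ((z - w) * (starRingEnd ℂ) z).re = Complex.normSq (z - w) + Complex.normSq z - Complex.normSq w := by
  simp [Complex.normSq_apply, Complex.mul_re, Complex.sub_re, Complex.sub_im,
    Complex.conj_re, Complex.conj_im]
  ring

lemma key_par (z w : ℂ) :
    Complex.normSq (z + w) = 2 * Complex.normSq z + 2 * Complex.normSq w - Complex.normSq (z - w) := by
  simp [Complex.normSq_apply, Complex.add_re, Complex.add_im, Complex.sub_re, Complex.sub_im]
  ring


/-- assume Assumption (β) and let `Ω ⊆ V`. For every finitely supported
`f` supported in `Ω` with `‖f‖_{β⁺} = 1` one has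
`2 − √(4 − h̃(Ω)²) ≤ 2 Re (Δ̃f, f)_{β⁺} ≤ 2 + √(4 − h̃(Ω)²)`; in particular `h̃(Ω) ≤ 2`. -/
theorem fujiwara_estimate
    (V : Type*) [Countable V] [DecidableEq V] (b : V → V → ℝ)
    (hb_nonneg : ∀ x y, 0 ≤ b x y)
    (hb_loop : ∀ x, b x x = 0)
    (hloc_fin : ∀ x, {y | b x y ≠ 0 ∨ b y x ≠ 0}.Finite)
    (hβp_pos : ∀ x, 0 < betaPlus b x)
    (hβm_pos : ∀ x, 0 < betaMinus b x)
    (hβ : ∀ x, betaPlus b x = betaMinus b x)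
    (Ω : Set V) :
    cheeger b (betaPlus b) Ω ≤ 2 ∧
    ∀ f : V → ℂ, (support f).Finite → support f ⊆ Ω →
      innerW (betaPlus b) f f = 1 →
      2 - Real.sqrt (4 - (cheeger b (betaPlus b) Ω) ^ 2)
          ≤ 2 * (innerW (betaPlus b) (lap b (betaPlus b) f) f).re ∧
      2 * (innerW (betaPlus b) (lap b (betaPlus b) f) f).re
          ≤ 2 + Real.sqrt (4 - (cheeger b (betaPlus b) Ω) ^ 2) := by
  set h := cheeger b (betaPlus b) Ω with hhdef
  -- Part 1 : h ≤ 2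
  have part1 : h ≤ 2 := by
    rcases Set.eq_empty_or_nonempty
      {r : ℝ | ∃ U : Finset V, U.Nonempty ∧ ↑U ⊆ Ω ∧ r = bdryWeight b U / ∑ x ∈ U, betaPlus b x}
      with he | ⟨r, hr⟩
    · rw [hhdef, cheeger, he, Real.sInf_empty]; norm_num
    · have hall : ∀ s ∈ {r : ℝ | ∃ U : Finset V, U.Nonempty ∧ ↑U ⊆ Ω ∧
          r = bdryWeight b U / ∑ x ∈ U, betaPlus b x}, s ≤ 2 := by
        rintro s ⟨U, hUne, hUΩ, rfl⟩
        have hpos : 0 < ∑ x ∈ U, betaPlus b x := Finset.sum_pos (fun x _ => hβp_pos x) hUne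
        rw [div_le_iff₀ hpos]
        have hbd : bdryWeight b U ≤ ∑ x ∈ U, (betaPlus b x + betaMinus b x) := by
          refine Finset.sum_le_sum fun x _ => ?_
          have hfin1 : (support fun y => b x y).Finite :=
            (hloc_fin x).subset fun y hy => Or.inl hy
          have hfin2 : (support fun y => b y x).Finite :=
            (hloc_fin x).subset fun y hy => Or.inr hy
          have hfin3 : (support fun y => if y ∈ U then (0:ℝ) else b x y + b y x).Finite := by
            refine (hloc_fin x).subset fun y hy => ?_
            simp only [mem_support] at hy
            simp only [Set.mem_setOf_eq]
            by_cases hyU : y ∈ U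
            · simp [hyU] at hy
            · rw [if_neg hyU] at hy
              by_contra hc
              push_neg at hc
              simp [hc.1, hc.2] at hy
          have hfin4 : (support fun y => b x y + b y x).Finite :=
            (hfin1.union hfin2).subset (support_add _ _)
          calc (∑ᶠ y, if y ∈ U then (0:ℝ) else b x y + b y x)
              = ∑ y ∈ hfin4.toFinset ∪ hfin3.toFinset, (if y ∈ U then (0:ℝ) else b x y + b y x) := by
                refine finsum_eq_finset_sum_of_support_subset _ fun y hy => ?_
                exact Finset.mem_union.2 (Or.inr (hfin3.mem_toFinset.2 hy))
            _ ≤ ∑ y ∈ hfin4.toFinset ∪ hfin3.toFinset, (b x y + b y x) := by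
                refine Finset.sum_le_sum fun y _ => ?_
                by_cases hyU : y ∈ U
                · simp [hyU, add_nonneg (hb_nonneg x y) (hb_nonneg y x)]
                · simp [hyU]
            _ = ∑ᶠ y, (b x y + b y x) :=
                (finsum_eq_finset_sum_of_support_subset _ fun y hy =>
                  Finset.mem_union.2 (Or.inl (hfin4.mem_toFinset.2 hy))).symm
            _ = (∑ᶠ y, b x y) + ∑ᶠ y, b y x := finsum_add_distrib hfin1 hfin2
            _ = betaPlus b x + betaMinus b x := rfl
        calc bdryWeight b U ≤ ∑ x ∈ U, (betaPlus b x + betaMinus b x) := hbd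
          _ = 2 * ∑ x ∈ U, betaPlus b x := by
              rw [Finset.mul_sum]
              exact Finset.sum_congr rfl fun x _ => by rw [← hβ x]; ring
      exact le_trans (csInf_le (cheeger_bddBelow hb_nonneg hβp_pos Ω) hr) (hall r hr)
  have hge0 : 0 ≤ h := cheeger_nonneg hb_nonneg hβp_pos Ω
  refine ⟨part1, ?_⟩
  intro f hfin hsuppΩ hnorm
  classical
  set S : Finset V := hfin.toFinset with hSdef
  set T : Finset V := S ∪ S.biUnion (fun x => (hloc_fin x).toFinset) with hTdef
  have hST : S ⊆ T := Finset.subset_union_left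
  have hfS : ∀ x, f x ≠ 0 → x ∈ S := fun x hx => hfin.mem_toFinset.2 hx
  have hfT : ∀ x, f x ≠ 0 → x ∈ T := fun x hx => hST (hfS x hx)
  have hnbrT : ∀ x y, f x ≠ 0 → (b x y ≠ 0 ∨ b y x ≠ 0) → y ∈ T := by
    intro x y hx hxy
    exact Finset.mem_union.2 (Or.inr (Finset.mem_biUnion.2
      ⟨x, hfS x hx, (hloc_fin x).mem_toFinset.2 hxy⟩))
  -- conversions of betaPlus/betaMinus to sums over T
  have hbpT : ∀ x, f x ≠ 0 → betaPlus b x = ∑ y ∈ T, b x y := by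
    intro x hx
    exact finsum_eq_finset_sum_of_support_subset _ fun y hy =>
      hnbrT x y hx (Or.inl hy)
  have hbmT : ∀ x, f x ≠ 0 → betaMinus b x = ∑ y ∈ T, b y x := by
    intro x hx
    exact finsum_eq_finset_sum_of_support_subset _ fun y hy =>
      hnbrT x y hx (Or.inr hy)
  -- norm condition as real sum over T
  have hW1 : innerW (betaPlus b) f f
      = ((∑ x ∈ T, betaPlus b x * Complex.normSq (f x) : ℝ) : ℂ) := by
    rw [innerW]
    rw [finsum_eq_finset_sum_of_support_subset _ (s := T) (fun x hx => by
      simp only [mem_support] at hx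
      by_contra hc
      have : f x = 0 := by
        by_contra hf
        exact hc (Finset.mem_coe.2 (hfT x hf))
      simp [this] at hx)]
    rw [Complex.ofReal_sum]
    refine Finset.sum_congr rfl fun x _ => ?_
    rw [mul_assoc, Complex.mul_conj, Complex.ofReal_mul]
  have hnormR : ∑ x ∈ T, betaPlus b x * Complex.normSq (f x) = 1 := by
    have := hW1.symm.trans hnorm
    exact_mod_cast this
  -- numerator as double sum
  have hD : innerW (betaPlus b) (lap b (betaPlus b) f) f
      = ∑ x ∈ T, ∑ y ∈ T, (b x y : ℂ) * (f x - f y) * (starRingEnd ℂ) (f x) := by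
    rw [innerW]
    rw [finsum_eq_finset_sum_of_support_subset _ (s := T) (fun x hx => by
      simp only [mem_support] at hx
      by_contra hc
      have : f x = 0 := by
        by_contra hf
        exact hc (Finset.mem_coe.2 (hfT x hf))
      simp [this] at hx)]
    refine Finset.sum_congr rfl fun x hxT => ?_
    by_cases hfx : f x = 0
    · simp [hfx, lap]
    · rw [lap]
      have hbne : ((betaPlus b x : ℝ) : ℂ) ≠ 0 := by
        exact_mod_cast (hβp_pos x).ne'
      have hinner : (∑ᶠ y, (b x y : ℂ) * (f x - f y))
          = ∑ y ∈ T, (b x y : ℂ) * (f x - f y) := by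
        refine finsum_eq_finset_sum_of_support_subset _ fun y hy => ?_
        simp only [mem_support] at hy
        have hbxy : b x y ≠ 0 := by
          intro hz
          simp [hz] at hy
        exact hnbrT x y hfx (Or.inl hbxy)
      rw [hinner, ← Finset.sum_mul]
      field_simp
  set D : ℝ := (innerW (betaPlus b) (lap b (betaPlus b) f) f).re with hDdef
  -- marginal sums
  have hm1 : ∑ x ∈ T, ∑ y ∈ T, b x y * Complex.normSq (f x) = 1 := by
    rw [← hnormR]
    refine Finset.sum_congr rfl fun x _ => ?_
    by_cases hfx : f x = 0
    · simp [hfx]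
    · rw [← Finset.sum_mul, ← hbpT x hfx]
  have hm2 : ∑ x ∈ T, ∑ y ∈ T, b x y * Complex.normSq (f y) = 1 := by
    rw [Finset.sum_comm, ← hnormR]
    refine Finset.sum_congr rfl fun y _ => ?_
    by_cases hfy : f y = 0
    · simp [hfy]
    · rw [← Finset.sum_mul, ← hbmT y hfy, ← hβ y]
  -- 2D = energy
  have h2D : 2 * D = ∑ x ∈ T, ∑ y ∈ T, b x y * Complex.normSq (f x - f y) := by
    have hre : D = ∑ x ∈ T, ∑ y ∈ T, b x y * ((f x - f y) * (starRingEnd ℂ) (f x)).re := by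
      rw [hDdef, hD, Complex.re_sum]
      refine Finset.sum_congr rfl fun x _ => ?_
      rw [Complex.re_sum]
      refine Finset.sum_congr rfl fun y _ => ?_
      rw [mul_assoc, Complex.re_ofReal_mul]
    have expand : ∑ x ∈ T, ∑ y ∈ T, (2 * (b x y * ((f x - f y) * (starRingEnd ℂ) (f x)).re))
        = ∑ x ∈ T, ∑ y ∈ T, (b x y * Complex.normSq (f x - f y)
            + (b x y * Complex.normSq (f x) - b x y * Complex.normSq (f y))) := by
      refine Finset.sum_congr rfl fun x _ => Finset.sum_congr rfl fun y _ => ?_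
      have := key_re (f x) (f y)
      linear_combination (b x y) * this
    have lhs_eq : ∑ x ∈ T, ∑ y ∈ T, (2 * (b x y * ((f x - f y) * (starRingEnd ℂ) (f x)).re))
        = 2 * D := by
      rw [hre, Finset.mul_sum]
      exact Finset.sum_congr rfl fun x _ => by rw [Finset.mul_sum]
    have rhs_eq : ∑ x ∈ T, ∑ y ∈ T, (b x y * Complex.normSq (f x - f y)
            + (b x y * Complex.normSq (f x) - b x y * Complex.normSq (f y)))
        = (∑ x ∈ T, ∑ y ∈ T, b x y * Complex.normSq (f x - f y)) + (1 - 1) := by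
      simp only [Finset.sum_add_distrib, Finset.sum_sub_distrib]
      rw [hm1, hm2]
    rw [← lhs_eq, expand, rhs_eq]
    ring
  -- parallelogram
  have hpar : ∑ x ∈ T, ∑ y ∈ T, b x y * Complex.normSq (f x + f y) = 4 - 2 * D := by
    have expand : ∑ x ∈ T, ∑ y ∈ T, b x y * Complex.normSq (f x + f y)
        = ∑ x ∈ T, ∑ y ∈ T, (2 * (b x y * Complex.normSq (f x))
            + 2 * (b x y * Complex.normSq (f y)) - b x y * Complex.normSq (f x - f y)) := by
      refine Finset.sum_congr rfl fun x _ => Finset.sum_congr rfl fun y _ => ?_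
      rw [key_par (f x) (f y)]
      ring
    rw [expand]
    simp only [Finset.sum_sub_distrib, Finset.sum_add_distrib, ← Finset.mul_sum]
    rw [hm1, hm2, ← h2D]
    ring
  -- the absolute-value function
  set g : V → ℝ := fun x => ‖f x‖ with hgdef
  have hg2 : ∀ x, g x ^ 2 = Complex.normSq (f x) := fun x => Complex.sq_norm (f x)
  have hg0 : ∀ x, 0 ≤ g x := fun x => norm_nonneg _
  set t : ℝ := ∑ x ∈ T, ∑ y ∈ T, b x y * (g x - g y) ^ 2 with htdef
  have ht1 : t ≤ 2 * D := by
    rw [h2D, htdef]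
    refine Finset.sum_le_sum fun x _ => Finset.sum_le_sum fun y _ => ?_
    refine mul_le_mul_of_nonneg_left ?_ (hb_nonneg x y)
    rw [← Complex.sq_norm, ← _root_.sq_abs (g x - g y)]
    exact pow_le_pow_left₀ (abs_nonneg _)
      (abs_norm_sub_norm_le (f x) (f y)) 2
  have ht2 : t ≤ 4 - 2 * D := by
    rw [← hpar, htdef]
    refine Finset.sum_le_sum fun x _ => Finset.sum_le_sum fun y _ => ?_
    refine mul_le_mul_of_nonneg_left ?_ (hb_nonneg x y)
    rw [← Complex.sq_norm, ← _root_.sq_abs (g x - g y)]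
    refine pow_le_pow_left₀ (abs_nonneg _) ?_ 2
    have := abs_norm_sub_norm_le (f x) (-f y)
    simpa [sub_neg_eq_add] using this
  -- sum of (gx+gy)^2
  have hgsum : ∑ x ∈ T, ∑ y ∈ T, b x y * (g x + g y) ^ 2 = 4 - t := by
    have expand : ∑ x ∈ T, ∑ y ∈ T, b x y * (g x + g y) ^ 2
        = ∑ x ∈ T, ∑ y ∈ T, (2 * (b x y * Complex.normSq (f x))
            + 2 * (b x y * Complex.normSq (f y)) - b x y * (g x - g y) ^ 2) := by
      refine Finset.sum_congr rfl fun x _ => Finset.sum_congr rfl fun y _ => ?_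
      rw [← hg2, ← hg2]
      ring
    rw [expand]
    simp only [Finset.sum_sub_distrib, Finset.sum_add_distrib, ← Finset.mul_sum]
    rw [hm1, hm2, ← htdef]
    ring
  -- Cauchy–Schwarz
  set C : ℝ := ∑ x ∈ T, ∑ y ∈ T, b x y * |g x ^ 2 - g y ^ 2| with hCdef
  have hCS : C ^ 2 ≤ t * (4 - t) := by
    have key := Finset.sum_mul_sq_le_sq_mul_sq (T ×ˢ T)
      (fun p => Real.sqrt (b p.1 p.2) * |g p.1 - g p.2|)
      (fun p => Real.sqrt (b p.1 p.2) * (g p.1 + g p.2))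
    have e1 : ∑ p ∈ T ×ˢ T, (Real.sqrt (b p.1 p.2) * |g p.1 - g p.2|)
        * (Real.sqrt (b p.1 p.2) * (g p.1 + g p.2)) = C := by
      rw [hCdef, Finset.sum_product]
      refine Finset.sum_congr rfl fun x _ => Finset.sum_congr rfl fun y _ => ?_
      have hb' : Real.sqrt (b x y) * Real.sqrt (b x y) = b x y :=
        Real.mul_self_sqrt (hb_nonneg x y)
      have habs : |g x - g y| * (g x + g y) = |g x ^ 2 - g y ^ 2| := by
        rw [show g x ^ 2 - g y ^ 2 = (g x - g y) * (g x + g y) by ring, abs_mul,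
          _root_.abs_of_nonneg (add_nonneg (hg0 x) (hg0 y))]
      calc (Real.sqrt (b x y) * |g x - g y|) * (Real.sqrt (b x y) * (g x + g y))
          = (Real.sqrt (b x y) * Real.sqrt (b x y)) * (|g x - g y| * (g x + g y)) := by ring
        _ = b x y * |g x ^ 2 - g y ^ 2| := by rw [hb', habs]
    have e2 : ∑ p ∈ T ×ˢ T, (Real.sqrt (b p.1 p.2) * |g p.1 - g p.2|) ^ 2 = t := by
      rw [htdef, Finset.sum_product]
      refine Finset.sum_congr rfl fun x _ => Finset.sum_congr rfl fun y _ => ?_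
      rw [mul_pow, _root_.sq_abs, Real.sq_sqrt (hb_nonneg x y)]
    have e3 : ∑ p ∈ T ×ˢ T, (Real.sqrt (b p.1 p.2) * (g p.1 + g p.2)) ^ 2 = 4 - t := by
      rw [← hgsum, Finset.sum_product]
      refine Finset.sum_congr rfl fun x _ => Finset.sum_congr rfl fun y _ => ?_
      rw [mul_pow, Real.sq_sqrt (hb_nonneg x y)]
    rw [e1, e2, e3] at key
    exact key
  -- coarea estimate
  have hcoarea : h * 1 ≤ C := by
    have happ := coarea b hb_nonneg hβp_pos Ω T
      ((T.filter (fun x => (fun z => g z ^ 2) x ≠ 0)).card) (fun x => g x ^ 2)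
      le_rfl (fun x => sq_nonneg _)
      (fun x hx => by
        have hfx : f x ≠ 0 := by
          intro hz
          simp [hgdef, hz] at hx
        exact ⟨hfT x hfx, hsuppΩ hfx⟩)
      (fun x y hx hxy => by
        have hfx : f x ≠ 0 := by
          intro hz
          simp [hgdef, hz] at hx
        exact hnbrT x y hfx hxy)
    have hsum1 : ∑ x ∈ T, betaPlus b x * g x ^ 2 = 1 := by
      rw [← hnormR]
      exact Finset.sum_congr rfl fun x _ => by rw [hg2]
    rw [hsum1] at happ
    rw [hCdef]
    exact happ
  have hC0 : 0 ≤ C := by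
    rw [hCdef]
    exact Finset.sum_nonneg fun x _ => Finset.sum_nonneg fun y _ =>
      mul_nonneg (hb_nonneg x y) (abs_nonneg _)
  have hhC : h ≤ C := by linarith
  have hh2 : h ^ 2 ≤ t * (4 - t) := le_trans (pow_le_pow_left₀ hge0 hhC 2) hCS
  have hsq : (t - 2) ^ 2 ≤ 4 - h ^ 2 := by nlinarith
  have habs : |t - 2| ≤ Real.sqrt (4 - h ^ 2) := Real.abs_le_sqrt hsq
  obtain ⟨hl, hr⟩ := abs_le.1 habs
  constructor
  · linarith
  · linarith
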